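/- Let n = p_1 · p_2 · ⋯ · p_k be a Carmichael number with distinct prime factors and let h be the number of prime factors p_i with v_2(p_i − 1) = v_2(λ(n)). Then h ≥ 1 and h ≠ k − 1; that is, h ∈ {1, 2, …, k−2, k}. -/

import Mathlib

open scoped Classical

/-- The Carmichael lambda function: the least `ℓ > 0` with `a ^ ℓ ≡ 1 (mod n)`
for all `a` coprime to `n`. -/
noncomputable def carmichaelLambda (n : ℕ) : ℕ :=
  sInf {ℓ : ℕ | 0 < ℓ ∧ ∀ a : ℕ, Nat.Coprime a n → a ^ ℓ ≡ 1 [MOD n]}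

/-- A Carmichael number: a composite `n` with `a ^ (n-1) ≡ 1 (mod n)`
for all `a` coprime to `n`. -/
def IsCarmichael (n : ℕ) : Prop :=
  1 < n ∧ ¬ n.Prime ∧ ∀ a : ℕ, Nat.Coprime a n → a ^ (n - 1) ≡ 1 [MOD n]

/-- The Euler liars for `n`, as residues in `{0, …, n-1}` coprime to `n` with
`(a/n) ≡ a ^ ((n-1)/2) (mod n)`. -/
noncomputable def eulerLiars (n : ℕ) : Finset ℕ :=
  (Finset.range n).filter
    (fun a => Nat.Coprime a n ∧ (jacobiSym (a : ℤ) n ≡ (a : ℤ) ^ ((n - 1) / 2) [ZMOD n]))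

/-! ### Auxiliary lemmas -/

lemma binom_aux (t : ℤ) (m : ℕ) : (t^2 : ℤ) ∣ (1+t)^m - (1 + m*t) := by
  induction m with
  | zero => simp
  | succ k ih =>
    have heq : (1+t)^(k+1) - (1 + (k+1 : ℕ)*t)
        = (1+t)*((1+t)^k - (1+(k:ℕ)*t)) + k*t^2 := by push_cast; ring
    rw [heq]
    exact dvd_add (Dvd.dvd.mul_left ih _) (Dvd.dvd.mul_left dvd_rfl _)

lemma carmichael_squarefree {n : ℕ} (hc : IsCarmichael n) : Squarefree n := by
  obtain ⟨h1, hnp, hA⟩ := hc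
  rw [Nat.squarefree_iff_prime_squarefree]
  intro p hp hdvd
  obtain ⟨s, hs⟩ := hdvd
  set t := p * s with ht
  have hn : n = p * t := by rw [ht, hs]; ring
  have hs0 : 0 < s := by
    rcases Nat.eq_zero_or_pos s with h0 | h0
    · simp [h0] at hs; omega
    · exact h0
  have hp2 := hp.two_le
  have ht0 : 0 < t := by have := Nat.mul_pos (by omega : 0 < p) hs0; omega
  have htn : t < n := by rw [hn]; nlinarith
  -- coprimality of t+1 with n
  have hco : Nat.Coprime (t + 1) n := by
    rw [Nat.coprime_comm]
    by_contra hg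
    obtain ⟨r, hr, hrn, hra⟩ := Nat.Prime.not_coprime_iff_dvd.mp hg
    have hrt : r ∣ t := by
      rcases (Nat.Prime.dvd_mul hr).mp (hn ▸ hrn) with h | h
      · have : r = p := (Nat.prime_dvd_prime_iff_eq hr hp).mp h
        subst this; exact Dvd.intro s rfl
      · exact h
    have : r ∣ 1 := (Nat.dvd_add_right hrt).mp hra
    exact hr.one_lt.ne' (Nat.eq_one_of_dvd_one this) |>.elim
  have hmod := hA (t + 1) hco
  -- pass to ℤ
  have hZ : (n : ℤ) ∣ (1 + (t:ℤ))^(n-1) - 1 := by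
    have hd := (Nat.modEq_iff_dvd (n := n) (a := (t+1)^(n-1)) (b := 1)).mp hmod
    push_cast at hd
    have := dvd_neg.mpr hd
    rw [neg_sub] at this
    rw [add_comm (1:ℤ)]; exact this
  -- n ∣ t^2
  have hnt2 : (n : ℤ) ∣ (t:ℤ)^2 := by
    have : (t:ℤ)^2 = (n:ℤ) * s := by
      have : (t:ℕ)*t = n * s := by rw [hn, ht]; ring
      have := congrArg (Nat.cast : ℕ → ℤ) this
      push_cast at this; nlinarith [this]
    rw [this]; exact Dvd.intro s rfl
  have hb := binom_aux (t : ℤ) (n - 1)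
  have hkey : (n : ℤ) ∣ ((n:ℕ) - 1 : ℕ) * (t:ℤ) := by
    have h2 : (n:ℤ) ∣ (1+(t:ℤ))^(n-1) - (1 + ((n-1:ℕ):ℤ)*t) := dvd_trans hnt2 hb
    have := dvd_sub hZ h2
    simpa using this
  have hnt : (n : ℤ) ∣ (t:ℤ) := by
    have hcast : (((n:ℕ) - 1 : ℕ) : ℤ) = (n:ℤ) - 1 := by
      push_cast [Nat.cast_sub (by omega : 1 ≤ n)]; ring
    rw [hcast] at hkey
    have h3 : (n:ℤ) ∣ (n:ℤ) * t - ((n:ℤ)-1)*t := dvd_sub (Dvd.intro t rfl) hkey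
    have h4 : (n:ℤ) * t - ((n:ℤ)-1)*t = t := by ring
    rwa [h4] at h3
  have : (n : ℕ) ∣ t := Int.ofNat_dvd.mp (by exact_mod_cast hnt)
  exact absurd (Nat.le_of_dvd ht0 this) (by omega)

lemma korselt_dvd {n p : ℕ} (hn : 1 < n) (hsf : Squarefree n) (hp : p.Prime) (hpn : p ∣ n)
    {ℓ : ℕ} (hℓ : ∀ a : ℕ, Nat.Coprime a n → a ^ ℓ ≡ 1 [MOD n]) : (p - 1) ∣ ℓ := by
  haveI : Fact p.Prime := ⟨hp⟩
  obtain ⟨g, hg⟩ := IsCyclic.exists_generator (α := (ZMod p)ˣ)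
  have horder : orderOf g = p - 1 := by
    rw [orderOf_eq_card_of_forall_mem_zpowers hg, Nat.card_eq_fintype_card,
      ZMod.card_units_eq_totient, Nat.totient_prime hp]
  set m := n / p with hm
  have hnm : n = p * m := (Nat.mul_div_cancel' hpn).symm
  have hpm : Nat.Coprime p m := by
    rw [hp.coprime_iff_not_dvd]
    intro hdvd
    have : p * p ∣ n := by rw [hnm]; exact mul_dvd_mul_left p hdvd
    exact hp.one_lt.ne' (Nat.isUnit_iff.mp (hsf p this))
  obtain ⟨a, ha1, ha2⟩ := Nat.chineseRemainder hpm ((g : ZMod p).val) 1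
  have haco : Nat.Coprime a n := by
    rw [hnm, Nat.coprime_mul_iff_right]
    constructor
    · have := ZMod.val_coe_unit_coprime g
      have hgcd : Nat.gcd a p = Nat.gcd ((g : ZMod p).val) p := Nat.ModEq.gcd_eq ha1
      unfold Nat.Coprime at *
      rw [hgcd]; exact this
    · have hgcd : Nat.gcd a m = Nat.gcd 1 m := Nat.ModEq.gcd_eq ha2
      unfold Nat.Coprime; rw [hgcd]; exact Nat.gcd_one_left m
  have hmod := (hℓ a haco).of_dvd hpn
  have hcast : ((a : ZMod p)) = (g : ZMod p) := by
    have := (ZMod.natCast_eq_natCast_iff _ _ _).mpr ha1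
    rwa [ZMod.natCast_val, ZMod.cast_id] at this
  have hpow : ((g : ZMod p))^ℓ = 1 := by
    have := (ZMod.natCast_eq_natCast_iff _ _ _).mpr hmod
    push_cast at this
    rwa [hcast] at this
  have hu : g ^ ℓ = 1 := by
    ext
    push_cast
    exact hpow
  rw [← horder]
  exact orderOf_dvd_of_pow_eq_one hu

lemma carmichaelLambda_eq {n : ℕ} (hc : IsCarmichael n) :
    carmichaelLambda n = n.primeFactors.lcm (fun p => p - 1) := by
  obtain ⟨h1, hnp, hA⟩ := hc
  have hsf : Squarefree n := carmichael_squarefree ⟨h1, hnp, hA⟩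
  set L := n.primeFactors.lcm (fun p => p - 1) with hL
  have hkors : ∀ p ∈ n.primeFactors, (p - 1) ∣ (n - 1) := fun p hp =>
    korselt_dvd h1 hsf (Nat.prime_of_mem_primeFactors hp) (Nat.dvd_of_mem_primeFactors hp) hA
  have hLd : L ∣ n - 1 := Finset.lcm_dvd hkors
  have hL0 : 0 < L := by
    rcases Nat.eq_zero_or_pos L with h0 | h0
    · rw [h0] at hLd; have := Nat.eq_zero_of_zero_dvd hLd; omega
    · exact h0
  have hmemL : L ∈ {ℓ : ℕ | 0 < ℓ ∧ ∀ a : ℕ, Nat.Coprime a n → a ^ ℓ ≡ 1 [MOD n]} := by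
    refine ⟨hL0, fun a hco => ?_⟩
    have ha1 : 1 ≤ a := by
      rcases Nat.eq_zero_or_pos a with h0 | h0
      · rw [h0] at hco; simp [Nat.Coprime] at hco; omega
      · exact h0
    have hdvd : ∀ p ∈ n.primeFactors, p ∣ a ^ L - 1 := by
      intro p hp
      have hpp := Nat.prime_of_mem_primeFactors hp
      haveI : Fact p.Prime := ⟨hpp⟩
      have hcop : Nat.Coprime a p :=
        Nat.Coprime.coprime_dvd_right (Nat.dvd_of_mem_primeFactors hp) hco
      have hne : (a : ZMod p) ≠ 0 := by
        intro h0
        have : p ∣ a := (ZMod.natCast_eq_zero_iff a p).mp h0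
        have h2 : p ∣ 1 := hcop ▸ Nat.dvd_gcd this dvd_rfl
        have := Nat.le_of_dvd one_pos h2
        have := hpp.two_le
        omega
      obtain ⟨c, hc⟩ := Finset.dvd_lcm (f := fun p => p - 1) hp
      rw [← hL] at hc
      have hpow : (a : ZMod p) ^ L = 1 := by
        rw [hc, pow_mul, ZMod.pow_card_sub_one_eq_one hne, one_pow]
      have hmm : a ^ L ≡ 1 [MOD p] := by
        rw [← ZMod.natCast_eq_natCast_iff]
        push_cast
        exact hpow
      exact (Nat.modEq_iff_dvd' (Nat.one_le_pow _ _ ha1)).mp hmm.symm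
    have hprod : ∏ p ∈ n.primeFactors, p ∣ a ^ L - 1 :=
      Finset.prod_primes_dvd _ (fun p hp => (Nat.prime_of_mem_primeFactors hp).prime) hdvd
    rw [Nat.prod_primeFactors_of_squarefree hsf] at hprod
    exact ((Nat.modEq_iff_dvd' (Nat.one_le_pow _ _ ha1)).mpr hprod).symm
  have hbound : ∀ ℓ ∈ {ℓ : ℕ | 0 < ℓ ∧ ∀ a : ℕ, Nat.Coprime a n → a ^ ℓ ≡ 1 [MOD n]}, L ∣ ℓ := by
    intro ℓ hℓ
    exact Finset.lcm_dvd fun p hp =>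
      korselt_dvd h1 hsf (Nat.prime_of_mem_primeFactors hp) (Nat.dvd_of_mem_primeFactors hp) hℓ.2
  have hinf_mem := Nat.sInf_mem
    (s := {ℓ : ℕ | 0 < ℓ ∧ ∀ a : ℕ, Nat.Coprime a n → a ^ ℓ ≡ 1 [MOD n]}) ⟨L, hmemL⟩
  refine le_antisymm (Nat.sInf_le hmemL) ?_
  exact Nat.le_of_dvd hinf_mem.1 (hbound _ hinf_mem)

lemma padicValNat_lcm2 {a b : ℕ} (ha : a ≠ 0) (hb : b ≠ 0) :
    padicValNat 2 (Nat.lcm a b) = max (padicValNat 2 a) (padicValNat 2 b) := by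
  have h := Nat.factorization_lcm ha hb
  rw [← Nat.factorization_def _ Nat.prime_two, h, Finsupp.sup_apply,
    Nat.factorization_def _ Nat.prime_two, Nat.factorization_def _ Nat.prime_two]

lemma padicValNat_finset_lcm (s : Finset ℕ) (f : ℕ → ℕ) (hf : ∀ p ∈ s, f p ≠ 0) :
    padicValNat 2 (s.lcm f) = s.sup (fun p => padicValNat 2 (f p)) := by
  induction s using Finset.induction with
  | empty => simp
  | @insert a s ha ih =>
    rw [Finset.lcm_insert, Finset.sup_insert]
    have hfa : f a ≠ 0 := hf a (Finset.mem_insert_self a s)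
    have hlcm0 : s.lcm f ≠ 0 := by
      intro h0
      obtain ⟨p, hp, hfp⟩ := Finset.lcm_eq_zero_iff.mp h0
      exact hf p (Finset.mem_insert_of_mem hp) hfp
    have heq : lcm (f a) (s.lcm f) = Nat.lcm (f a) (s.lcm f) := rfl
    rw [heq, padicValNat_lcm2 hfa hlcm0, ih (fun p hp => hf p (Finset.mem_insert_of_mem hp))]

/-- For a Carmichael number with `k` prime factors, the number `h` of prime factors `p`
with `v₂(p - 1) = v₂(λ(n))` satisfies `h ≥ 1` and `h ≠ k - 1`. -/
theorem h_ne_k_sub_one (n : ℕ) (hc : IsCarmichael n)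
    (h k : ℕ) (hk : k = n.primeFactors.card)
    (hh : h = (n.primeFactors.filter
      (fun p => padicValNat 2 (p - 1) = padicValNat 2 (carmichaelLambda n))).card) :
    1 ≤ h ∧ h ≠ k - 1 := by
  have hsf := carmichael_squarefree hc
  have hlam := carmichaelLambda_eq hc
  obtain ⟨hn1, hnp, hA⟩ := hc
  set S := n.primeFactors with hSdef
  set F := S.filter
      (fun p => padicValNat 2 (p - 1) = padicValNat 2 (carmichaelLambda n)) with hFdef
  have hSne : S.Nonempty := Nat.nonempty_primeFactors.mpr hn1
  have hfne : ∀ p ∈ S, p - 1 ≠ 0 := fun p hp => by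
    have := (Nat.prime_of_mem_primeFactors hp).two_le; omega
  set v := S.sup (fun p => padicValNat 2 (p - 1)) with hvdef
  have hv : padicValNat 2 (carmichaelLambda n) = v := by
    rw [hlam, padicValNat_finset_lcm S _ hfne]
  -- h ≥ 1
  obtain ⟨p0, hp0S, hp0⟩ := Finset.exists_mem_eq_sup S hSne (fun p => padicValNat 2 (p - 1))
  have hp0F : p0 ∈ F :=
    Finset.mem_filter.mpr ⟨hp0S, by rw [hv, hvdef, hp0]⟩
  have hone : 1 ≤ h := by rw [hh]; exact Finset.card_pos.mpr ⟨p0, hp0F⟩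
  refine ⟨hone, ?_⟩
  intro heq
  -- Korselt and λ ∣ n - 1
  have hkors : ∀ p ∈ S, (p - 1) ∣ (n - 1) := fun p hp =>
    korselt_dvd hn1 hsf (Nat.prime_of_mem_primeFactors hp) (Nat.dvd_of_mem_primeFactors hp) hA
  have hlamd : carmichaelLambda n ∣ n - 1 := by rw [hlam]; exact Finset.lcm_dvd hkors
  -- isolate the exceptional prime q
  have hFS : F ⊆ S := Finset.filter_subset _ _
  have hScard : 1 ≤ S.card := Finset.card_pos.mpr hSne
  have hcard : F.card = S.card - 1 := by omega
  have hSF : (S \ F).card = 1 := by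
    rw [Finset.card_sdiff_of_subset hFS, hcard]
    have := Finset.card_le_card hFS
    omega
  obtain ⟨q, hq⟩ := Finset.card_eq_one.mp hSF
  have hqmem := hq ▸ Finset.mem_singleton_self q
  have hqS : q ∈ S := (Finset.mem_sdiff.mp hqmem).1
  have hqF : q ∉ F := (Finset.mem_sdiff.mp hqmem).2
  set u := padicValNat 2 (q - 1) with hu
  have huv : u < v := by
    have hle : u ≤ v := Finset.le_sup (f := fun p => padicValNat 2 (p - 1)) hqS
    have hne : u ≠ v := by
      intro he
      exact hqF (Finset.mem_filter.mpr ⟨hqS, by rw [hv, ← he]⟩)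
    omega
  set m := 2 ^ (u + 1) with hm
  have hm1 : 1 < m := by
    have : 2 ^ 1 ≤ 2 ^ (u + 1) := Nat.pow_le_pow_right (by norm_num) (by omega)
    omega
  -- m ∣ n - 1
  have hmn : m ∣ n - 1 := by
    have h1 : m ∣ 2 ^ v := pow_dvd_pow 2 huv
    have h2 : (2:ℕ) ^ v ∣ carmichaelLambda n := by
      rw [← hv]; exact pow_padicValNat_dvd
    exact dvd_trans h1 (dvd_trans h2 hlamd)
  have hnm1 : (n : ZMod m) = 1 := by
    have hmod : 1 ≡ n [MOD m] := (Nat.modEq_iff_dvd' (by omega)).mpr hmn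
    have := (ZMod.natCast_eq_natCast_iff _ _ _).mpr hmod.symm
    simpa using this
  -- n = q * ∏_{p ∈ F} p  (mod m), with each factor 1
  have hSq : S = insert q F := by
    ext x
    simp only [Finset.mem_insert]
    constructor
    · intro hx
      by_cases hxF : x ∈ F
      · exact Or.inr hxF
      · left
        have : x ∈ S \ F := Finset.mem_sdiff.mpr ⟨hx, hxF⟩
        rw [hq] at this
        exact Finset.mem_singleton.mp this
    · rintro (rfl | hx)
      · exact hqS
      · exact hFS hx
  have hprodn : (n : ZMod m) = (q : ZMod m) * ∏ p ∈ F, (p : ZMod m) := by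
    conv_lhs => rw [← Nat.prod_primeFactors_of_squarefree hsf]
    rw [← hSdef]
    push_cast
    rw [hSq, Finset.prod_insert hqF]
  have hFone : ∀ p ∈ F, (p : ZMod m) = 1 := by
    intro p hp
    obtain ⟨hpS, hvp⟩ := Finset.mem_filter.mp hp
    have hvp' : padicValNat 2 (p - 1) = v := by rw [hvp, hv]
    have hdvd : m ∣ p - 1 := by
      refine dvd_trans (pow_dvd_pow 2 (by omega : u + 1 ≤ v)) ?_
      rw [← hvp']
      exact pow_padicValNat_dvd
    have hp1 : 1 ≤ p := (Nat.prime_of_mem_primeFactors hpS).one_lt.le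
    have hmod : 1 ≡ p [MOD m] := (Nat.modEq_iff_dvd' hp1).mpr hdvd
    have := (ZMod.natCast_eq_natCast_iff _ _ _).mpr hmod.symm
    simpa using this
  have hq1 : (q : ZMod m) = 1 := by
    rw [hprodn, Finset.prod_congr rfl hFone, Finset.prod_const_one, mul_one] at hnm1
    exact hnm1
  have hqmod : q ≡ 1 [MOD m] := by
    rw [← ZMod.natCast_eq_natCast_iff]
    simpa using hq1
  have hq1le : 1 ≤ q := (Nat.prime_of_mem_primeFactors hqS).one_lt.le
  have hqd : m ∣ q - 1 := (Nat.modEq_iff_dvd' hq1le).mp hqmod.symm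
  haveI : Fact (Nat.Prime 2) := ⟨Nat.prime_two⟩
  rcases (padicValNat_dvd_iff (u + 1) (q - 1)).mp hqd with h0 | hle
  · have := (Nat.prime_of_mem_primeFactors hqS).two_le
    omega
  · rw [← hu] at hle
    omega
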